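/- Let $H \subseteq G$ be a subgraph of a directed acyclic graph $G$ on $[n]$, and let $c_1,\dots,c_n, c \in \mathbb R$. The hyperplane $S = \{\mathbf x : \sum_i c_i x_i = c\}$ is a supporting hyperplane of $\tilde Q_G$ with $\tilde Q_G \cap S = Q_H$ (the face not containing the origin) if and only if: (a) $c < 0$; (b) $c_i \geq c_j + c$ for all $(i,j) \in E(G)$; (c) for every $(i,j) \in E(G)$, $c_i = c_j + c$ holds if and only if $(i,j) \in E(H)$. -/

import Mathlib

/-- The vector `e_i - e_j` associated to the directed edge `e = (i, j)`. -/
def vecOf (n : ℕ) (e : Fin n × Fin n) : Fin n → ℝ :=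
  fun k => (if k = e.1 then 1 else 0) - (if k = e.2 then 1 else 0)

/-- The root polytope `tilde Q_G = conv{0, e_i - e_j : (i,j) ∈ E(G)}`. -/
def tQ (n : ℕ) (E : Set (Fin n × Fin n)) : Set (Fin n → ℝ) :=
  convexHull ℝ ({0} ∪ vecOf n '' E)

/-- The root polytope `Q_H = conv{e_i - e_j : (i,j) ∈ E(H)}`. -/
def Qp (n : ℕ) (E : Set (Fin n × Fin n)) : Set (Fin n → ℝ) :=
  convexHull ℝ (vecOf n '' E)

/-- The linear functional `x ↦ ∑ i, c i * x i`. -/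
def lin (n : ℕ) (c : Fin n → ℝ) : (Fin n → ℝ) →ₗ[ℝ] ℝ where
  toFun x := ∑ i, c i * x i
  map_add' x y := by simp [mul_add, Finset.sum_add_distrib]
  map_smul' r x := by simp [Finset.mul_sum]; exact Finset.sum_congr rfl fun i _ => by ring

lemma lin_vec (n : ℕ) (c : Fin n → ℝ) (e : Fin n × Fin n) (h : e.1 ≠ e.2) :
    lin n c (vecOf n e) = c e.1 - c e.2 := by
  simp [lin, vecOf, mul_sub, Finset.sum_sub_distrib, mul_ite, Finset.sum_ite_eq']

lemma face_lemma {m : ℕ} (s : Set (Fin m → ℝ)) (L : (Fin m → ℝ) →ₗ[ℝ] ℝ) (a : ℝ)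
    (hs : ∀ y ∈ s, a ≤ L y) {x} (hx : x ∈ convexHull ℝ s) (hxa : L x = a) :
    x ∈ convexHull ℝ {y ∈ s | L y = a} := by
  rw [convexHull_eq] at hx
  obtain ⟨ι, t, w, z, hw0, hw1, hz, hxe⟩ := hx
  have hLx : ∑ i ∈ t, w i * L (z i) = a := by
    rw [← hxa, ← hxe, Finset.centerMass_eq_of_sum_1 _ _ hw1]
    simp [map_sum, map_smul, smul_eq_mul]
  have hsum : ∑ i ∈ t, w i * (L (z i) - a) = 0 := by
    have : ∑ i ∈ t, w i * (L (z i) - a) = (∑ i ∈ t, w i * L (z i)) - (∑ i ∈ t, w i) * a := by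
      rw [Finset.sum_mul, ← Finset.sum_sub_distrib]; exact Finset.sum_congr rfl fun i _ => by ring
    rw [this, hLx, hw1]; ring
  have hkey : ∀ i ∈ t, w i ≠ 0 → L (z i) = a := by
    intro i hi hwi
    have h0 := (Finset.sum_eq_zero_iff_of_nonneg (fun j hj =>
      mul_nonneg (hw0 j hj) (sub_nonneg.2 (hs _ (hz j hj))))).1 hsum i hi
    rcases mul_eq_zero.1 h0 with h | h
    · exact absurd h hwi
    · linarith [sub_eq_zero.1 h]
  rw [← hxe, ← Finset.centerMass_filter_ne_zero z]
  refine Finset.centerMass_mem_convexHull _ (fun i hi => hw0 i (Finset.filter_subset _ _ hi))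
    ?_ (fun i hi => ?_)
  · rw [Finset.sum_filter_ne_zero, hw1]; norm_num
  · rw [Finset.mem_filter] at hi
    exact ⟨hz i hi.1, hkey i hi.1 hi.2⟩

/-- The hyperplane `{x : ∑ cᵢxᵢ = a}` is a supporting hyperplane of `tilde Q_G` cutting out
the face `Q_H` (not containing the origin) iff (a) `a < 0`, (b) `cᵢ ≥ c_j + a` for all edges
`(i,j)` of `G`, and (c) for edges `(i,j)` of `G`, `cᵢ = c_j + a` iff `(i,j)` is an edge of `H`. -/
theorem stmt5 (n : ℕ) (E EH : Set (Fin n × Fin n))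
    (hE : ∀ e ∈ E, e.1 < e.2) (hH : EH ⊆ E)
    (c : Fin n → ℝ) (a : ℝ) :
    ((∀ x ∈ tQ n E, a ≤ ∑ i, c i * x i) ∧
      {x ∈ tQ n E | ∑ i, c i * x i = a} = Qp n EH)
    ↔ (a < 0 ∧ (∀ e ∈ E, c e.2 + a ≤ c e.1) ∧
        (∀ e ∈ E, c e.1 = c e.2 + a ↔ e ∈ EH)) := by
  have hne : ∀ e ∈ E, e.1 ≠ e.2 := fun e he => ne_of_lt (hE e he)
  have hlin : ∀ x : Fin n → ℝ, ∑ i, c i * x i = lin n c x := fun x => rfl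
  have h0mem : (0 : Fin n → ℝ) ∈ tQ n E :=
    subset_convexHull ℝ _ (Or.inl rfl)
  have hvmem : ∀ e ∈ E, vecOf n e ∈ tQ n E := fun e he =>
    subset_convexHull ℝ _ (Or.inr ⟨e, he, rfl⟩)
  -- 0 is not in Qp EH
  have h0notin : (0 : Fin n → ℝ) ∉ Qp n EH := by
    intro h0
    have hconv : Qp n EH ⊆ {x | lin n (fun i => (i : ℝ)) x < 0} := by
      apply convexHull_min ?_ (convex_halfSpace_lt (LinearMap.isLinear _) 0)
      rintro _ ⟨e, he, rfl⟩
      have := hE e (hH he)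
      rw [Set.mem_setOf_eq, lin_vec n _ e (hne e (hH he))]
      have : ((e.1 : ℕ) : ℝ) < ((e.2 : ℕ) : ℝ) := by exact_mod_cast this
      linarith
    have := hconv h0
    simp [lin] at this
  constructor
  · rintro ⟨hsupp, hface⟩
    have ha0 : a ≤ 0 := by simpa using hsupp 0 h0mem
    have ha : a < 0 := by
      rcases lt_or_eq_of_le ha0 with h | h
      · exact h
      · exfalso
        apply h0notin
        rw [← hface]
        exact ⟨h0mem, by simp [h]⟩
    refine ⟨ha, fun e he => ?_, fun e he => ?_⟩
    · have := hsupp (vecOf n e) (hvmem e he)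
      rw [hlin, lin_vec n c e (hne e he)] at this
      linarith
    constructor
    · intro hca
      by_contra henh
      have hin : vecOf n e ∈ Qp n EH := by
        rw [← hface]
        refine ⟨hvmem e he, ?_⟩
        rw [hlin, lin_vec n c e (hne e he)]; linarith
      -- separate vecOf e from Qp EH via x ↦ x e.1 - x e.2
      have hconv : Qp n EH ⊆ {x | lin n (vecOf n e) x ≤ 1} := by
        apply convexHull_min ?_ (convex_halfSpace_le (LinearMap.isLinear _) 1)
        rintro _ ⟨e', he', rfl⟩
        have hne' : e ≠ e' := fun h => henh (h ▸ he')
        rw [Set.mem_setOf_eq, lin_vec n _ e' (hne e' (hH he'))]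
        simp only [vecOf]
        have h12 := hne e he
        have hkey : ¬(e'.1 = e.1 ∧ e'.2 = e.2) := by
          rintro ⟨u, v⟩; exact hne' (Prod.ext_iff.mpr ⟨u.symm, v.symm⟩)
        split_ifs <;> simp_all <;> norm_num
      have := hconv hin
      rw [Set.mem_setOf_eq, lin_vec n _ e (hne e he)] at this
      simp [vecOf, hne e he, (hne e he).symm] at this
      linarith
    · intro heh
      have hin : vecOf n e ∈ Qp n EH := subset_convexHull ℝ _ ⟨e, heh, rfl⟩
      rw [← hface] at hin
      have := hin.2
      rw [hlin, lin_vec n c e (hne e he)] at this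
      linarith
  · rintro ⟨ha, hb, hc⟩
    have hgen : ∀ y ∈ ({0} ∪ vecOf n '' E : Set (Fin n → ℝ)), a ≤ lin n c y := by
      rintro y (rfl | ⟨e, he, rfl⟩)
      · simp [lin]; linarith
      · rw [lin_vec n c e (hne e he)]; linarith [hb e he]
    have hsupp : ∀ x ∈ tQ n E, a ≤ ∑ i, c i * x i := by
      intro x hx
      rw [hlin]
      exact convexHull_min hgen (convex_halfSpace_ge (LinearMap.isLinear _) a) hx
    refine ⟨hsupp, Set.Subset.antisymm ?_ ?_⟩
    · rintro x ⟨hx, hxa⟩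
      rw [hlin] at hxa
      have := face_lemma _ (lin n c) a hgen hx hxa
      refine convexHull_mono ?_ this
      rintro y ⟨(rfl | ⟨e, he, rfl⟩), hy⟩
      · exfalso; simp [lin] at hy; linarith
      · rw [lin_vec n c e (hne e he)] at hy
        exact ⟨e, (hc e he).1 (by linarith), rfl⟩
    · intro x hx
      refine ⟨convexHull_mono ((Set.image_mono hH).trans Set.subset_union_right) hx, ?_⟩
      rw [hlin]
      have : Qp n EH ⊆ {y | lin n c y = a} := by
        apply convexHull_min ?_ (convex_hyperplane (LinearMap.isLinear _) a)
        rintro _ ⟨e, he, rfl⟩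
        rw [Set.mem_setOf_eq, lin_vec n c e (hne e (hH he))]
        have := (hc e (hH he)).2 he
        linarith
      exact this hx
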